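/- Let $G$ be a graph on $n$ vertices with $m \ge 1$ edges, first Zagreb index $Z_1$, and let $0 \le \alpha < 1$. Let $\rho_1 \ge \cdots \ge \rho_n$ be the eigenvalues of $A_\alpha(G)$ and $\Theta_{A_\alpha}(G) = \rho_1 - \rho_n$ the $A_\alpha$-spread. If $\Theta_{A_\alpha}(G) > 0$, then $E_{A_\alpha}(G) \ge \frac{2}{\Theta_{A_\alpha}(G)}\left[\alpha^2 Z_1 + 2(1-\alpha)^2 m - \frac{4\alpha^2 m^2}{n}\right]$. -/

import Mathlib

open Finset

lemma trace_eq_sum_eig {n : Type*} [Fintype n] [DecidableEq n]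
    {A : Matrix n n ℝ} (hA : A.IsHermitian) :
    A.trace = ∑ i, hA.eigenvalues i := by
  nth_rw 1 [show A = (hA.eigenvectorUnitary : Matrix n n ℝ) * Matrix.diagonal (RCLike.ofReal ∘ hA.eigenvalues) * star (hA.eigenvectorUnitary : Matrix n n ℝ) from hA.spectral_theorem]
  rw [Matrix.trace_mul_comm, ← mul_assoc,
    (Matrix.mem_unitaryGroup_iff').mp (hA.eigenvectorUnitary).2, one_mul,
    Matrix.trace_diagonal]
  simp

lemma trace_sq_eq_sum_eig_sq {n : Type*} [Fintype n] [DecidableEq n]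
    {A : Matrix n n ℝ} (hA : A.IsHermitian) :
    (A * A).trace = ∑ i, hA.eigenvalues i ^ 2 := by
  set U : Matrix n n ℝ := (hA.eigenvectorUnitary : Matrix n n ℝ)
  have hU : star U * U = 1 := (Matrix.mem_unitaryGroup_iff').mp (hA.eigenvectorUnitary).2
  have hU2 : ∀ X : Matrix n n ℝ, star U * (U * X) = X := by
    intro X; rw [← mul_assoc, hU, one_mul]
  set D : Matrix n n ℝ := Matrix.diagonal (RCLike.ofReal ∘ hA.eigenvalues)
  have h1 : A = U * D * star U := hA.spectral_theorem
  have key : A * A = U * (D * D) * star U := by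
    rw [h1]; simp only [mul_assoc, hU2]
  rw [key, Matrix.trace_mul_comm, ← mul_assoc, hU, one_mul]
  simp [D, Matrix.diagonal_mul_diagonal, Matrix.trace_diagonal, sq]

lemma aux_ineq {ι : Type*} [Fintype ι] [Nonempty ι] (f : ι → ℝ) (c : ℝ)
    (hsum : ∑ i, (f i - c) = 0)
    (hΘ : 0 < Finset.univ.sup' Finset.univ_nonempty f
        - Finset.univ.inf' Finset.univ_nonempty f) :
    2 / (Finset.univ.sup' Finset.univ_nonempty f
          - Finset.univ.inf' Finset.univ_nonempty f)
        * ∑ i, (f i - c) ^ 2 ≤ ∑ i, |f i - c| := by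
  set M := Finset.univ.sup' Finset.univ_nonempty f with hM
  set m := Finset.univ.inf' Finset.univ_nonempty f with hm
  set t : ℝ := (M + m) / 2 - c with ht
  have key : ∀ i, |f i - c - t| ≤ (M - m) / 2 := by
    intro i
    have h1 : f i ≤ M := Finset.le_sup' f (Finset.mem_univ i)
    have h2 : m ≤ f i := Finset.inf'_le f (Finset.mem_univ i)
    rw [abs_le]; constructor <;> [skip; skip] <;> simp only [ht] <;> linarith
  have h3 : ∑ i, (f i - c) ^ 2 ≤ (M - m) / 2 * ∑ i, |f i - c| := by
    have e1 : ∑ i, (f i - c) ^ 2 = ∑ i, ((f i - c) - t) * (f i - c) := by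
      have : ∑ i, ((f i - c) - t) * (f i - c)
          = ∑ i, (f i - c) ^ 2 - t * ∑ i, (f i - c) := by
        rw [Finset.mul_sum, ← Finset.sum_sub_distrib]
        congr 1; ext i; ring
      rw [this, hsum, mul_zero, sub_zero]
    rw [e1, Finset.mul_sum]
    refine Finset.sum_le_sum fun i _ => ?_
    calc ((f i - c) - t) * (f i - c) ≤ |((f i - c) - t) * (f i - c)| := le_abs_self _
      _ = |f i - c - t| * |f i - c| := by rw [abs_mul]
      _ ≤ (M - m) / 2 * |f i - c| :=
        mul_le_mul_of_nonneg_right (key i) (abs_nonneg _)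
  rw [div_mul_eq_mul_div, div_le_iff₀ hΘ]
  nlinarith [h3]

/-- Spread lower bound for the `A_α`-energy: if `Θ = ρ₁ - ρ_n > 0` is the
`A_α`-spread of a graph `G` on `n` vertices with `m ≥ 1` edges and first Zagreb
index `Z₁`, then for `0 ≤ α < 1`,
`E_{A_α}(G) ≥ (2/Θ) [α² Z₁ + 2(1-α)² m - 4 α² m² / n]`. -/
theorem energy_Aalpha_spread_lower_bound {V : Type*} [Fintype V] [DecidableEq V]
    [Nonempty V] (G : SimpleGraph V) [DecidableRel G.Adj]
    (hm : 1 ≤ G.edgeFinset.card)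
    (α : ℝ) (hα0 : 0 ≤ α) (hα1 : α < 1)
    (hH : (α • Matrix.diagonal (fun v => (G.degree v : ℝ))
        + (1 - α) • G.adjMatrix ℝ).IsHermitian)
    (hΘ : 0 < Finset.univ.sup' Finset.univ_nonempty hH.eigenvalues
        - Finset.univ.inf' Finset.univ_nonempty hH.eigenvalues) :
    2 / (Finset.univ.sup' Finset.univ_nonempty hH.eigenvalues
          - Finset.univ.inf' Finset.univ_nonempty hH.eigenvalues)
        * (α ^ 2 * (∑ v, (G.degree v : ℝ) ^ 2)
            + 2 * (1 - α) ^ 2 * (G.edgeFinset.card : ℝ)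
            - 4 * α ^ 2 * (G.edgeFinset.card : ℝ) ^ 2 / (Fintype.card V : ℝ))
      ≤ ∑ i, |hH.eigenvalues i
          - 2 * α * (G.edgeFinset.card : ℝ) / (Fintype.card V : ℝ)| := by
  have hn : (0 : ℝ) < (Fintype.card V : ℝ) := by
    exact_mod_cast Fintype.card_pos
  set D : Matrix V V ℝ := Matrix.diagonal (fun v => (G.degree v : ℝ)) with hD
  set A : Matrix V V ℝ := G.adjMatrix ℝ with hA
  set mm : ℝ := (G.edgeFinset.card : ℝ) with hmm
  set c : ℝ := 2 * α * mm / (Fintype.card V : ℝ) with hc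
  have hdeg : ∑ v, (G.degree v : ℝ) = 2 * mm := by
    rw [hmm, ← Nat.cast_sum univ (fun v => G.degree v),
      G.sum_degrees_eq_twice_card_edges]
    push_cast; ring
  -- trace identities
  have hsum1 : ∑ i, hH.eigenvalues i = 2 * α * mm := by
    rw [← trace_eq_sum_eig hH]
    rw [Matrix.trace_add, Matrix.trace_smul, Matrix.trace_smul, hD, hA,
      Matrix.trace_diagonal, SimpleGraph.trace_adjMatrix, hdeg]
    simp; ring
  have hDA : (D * A).trace = 0 := by
    rw [Matrix.trace]
    apply Finset.sum_eq_zero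
    intro i _
    simp only [Matrix.diag, hD, hA, Matrix.diagonal_mul]
    simp
  have hAD : (A * D).trace = 0 := by
    rw [Matrix.trace]
    apply Finset.sum_eq_zero
    intro i _
    simp only [Matrix.diag, hD, hA, Matrix.mul_diagonal]
    simp
  have hAA : (A * A).trace = 2 * mm := by
    rw [Matrix.trace]
    have : ∀ i, (A * A).diag i = (G.degree i : ℝ) := fun i =>
      G.adjMatrix_mul_self_apply_self i
    rw [Finset.sum_congr rfl fun i _ => this i, hdeg]
  have hDD : (D * D).trace = ∑ v, (G.degree v : ℝ) ^ 2 := by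
    rw [hD, Matrix.diagonal_mul_diagonal, Matrix.trace_diagonal]
    simp [sq]
  have hsum2 : ∑ i, hH.eigenvalues i ^ 2
      = α ^ 2 * (∑ v, (G.degree v : ℝ) ^ 2) + 2 * (1 - α) ^ 2 * mm := by
    rw [← trace_sq_eq_sum_eig_sq hH, add_mul, mul_add, mul_add,
      Matrix.trace_add, Matrix.trace_add, Matrix.trace_add]
    simp only [Matrix.smul_mul, Matrix.mul_smul, Matrix.trace_smul,
      smul_eq_mul, hDA, hAD, hAA, hDD, mul_zero]
    ring
  have hsum0 : ∑ i, (hH.eigenvalues i - c) = 0 := by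
    rw [Finset.sum_sub_distrib, hsum1, Finset.sum_const, Finset.card_univ,
      nsmul_eq_mul, hc]
    field_simp
    ring
  have hbracket : α ^ 2 * (∑ v, (G.degree v : ℝ) ^ 2)
      + 2 * (1 - α) ^ 2 * mm - 4 * α ^ 2 * mm ^ 2 / (Fintype.card V : ℝ)
      = ∑ i, (hH.eigenvalues i - c) ^ 2 := by
    have : ∑ i, (hH.eigenvalues i - c) ^ 2
        = ∑ i, hH.eigenvalues i ^ 2 - 2 * c * ∑ i, hH.eigenvalues i
          + (Fintype.card V : ℝ) * c ^ 2 := by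
      rw [Finset.mul_sum, ← Finset.sum_sub_distrib]
      rw [show ((Fintype.card V : ℝ) * c ^ 2)
          = ∑ _i : V, c ^ 2 by rw [Finset.sum_const, Finset.card_univ, nsmul_eq_mul],
        ← Finset.sum_add_distrib]
      congr 1; ext i; ring
    rw [this, hsum1, hsum2, hc]
    field_simp
    ring
  rw [hbracket]
  exact aux_ineq hH.eigenvalues c hsum0 hΘ
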